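/- arXiv:1905.02028 — 5 statements merged into one kernel-verified Lean document; each statement's English description precedes it below -/
import Mathlib

section
/- Let f(p, v, w) = 2√(v² − p²) w²/(1 + v²)² − (pw − v)/(v(1 + v²)√(v² − p²)), let p₀ > 0, a > 0, δ > 0, and let v be a convex C² function on [p₀ − δ, p₀] with v(p₀) = p₀, v'(p₀) = 1 − a, and v(p) > p > 0 for p ∈ [p₀ − δ, p₀). Then there do not exist C¹ functions φ, ψ on [p₀ − δ, p₀] such that: φ'(p) = f_v(p, v(p), v'(p)) and ψ'(p) = f_{v'}(p, v(p), v'(p)) − φ(p) for p < p₀; ψ(p) ≤ 0 for all p; ψ(p) v''(p) = 0 for all p < p₀; ψ(p₀) = 0; and (−f(p, v(p), v'(p)) + φ(p)v'(p)) − φ(p) → 0 as p → p₀ − 0. -/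
/-- The integrand of the key problem of Newton's aerodynamic problem on the Maxwell
stratum: `f(p, v, w) = 2√(v² − p²)w²/(1 + v²)² − (pw − v)/(v(1 + v²)√(v² − p²))`. -/
noncomputable def newtonF (p v w : ℝ) : ℝ :=
  2 * Real.sqrt (v ^ 2 - p ^ 2) * w ^ 2 / (1 + v ^ 2) ^ 2 -
    (p * w - v) / (v * (1 + v ^ 2) * Real.sqrt (v ^ 2 - p ^ 2))

/-- (Nonsingular trajectories with `v'(p₀) = 1 − a`, `a > 0`, violate
Pontryagin's Maximum Principle.) There are no adjoint variables `φ, ψ ∈ C¹[p₀ − δ, p₀]`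
with `φ' = f_v`, `ψ' = f_{v'} − φ`, `ψ ≤ 0`, `ψ v'' = 0`, `ψ(p₀) = 0` and
`H − φ = (−f + φv') − φ → 0` as `p → p₀ − 0`, along a convex `C²` curve `v` with
`v(p₀) = p₀`, `v'(p₀) = 1 − a` and `v(p) > p > 0` on `[p₀ − δ, p₀)`. -/
theorem no_PMP_multipliers_for_nonsingular_endpoint
    (p₀ a δ : ℝ) (hp₀ : 0 < p₀) (ha : 0 < a) (hδ : 0 < δ)
    (v v' v'' : ℝ → ℝ)
    (hc : ContinuousOn v'' (Set.Icc (p₀ - δ) p₀))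
    (hd1 : ∀ p ∈ Set.Icc (p₀ - δ) p₀, HasDerivWithinAt v (v' p) (Set.Icc (p₀ - δ) p₀) p)
    (hd2 : ∀ p ∈ Set.Icc (p₀ - δ) p₀, HasDerivWithinAt v' (v'' p) (Set.Icc (p₀ - δ) p₀) p)
    (hconv : ConvexOn ℝ (Set.Icc (p₀ - δ) p₀) v)
    (hvp₀ : v p₀ = p₀) (hv'p₀ : v' p₀ = 1 - a)
    (hgt : ∀ p ∈ Set.Ico (p₀ - δ) p₀, p < v p ∧ 0 < p) :
    ¬ ∃ φ ψ : ℝ → ℝ,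
      ContinuousOn φ (Set.Icc (p₀ - δ) p₀) ∧
      ContinuousOn ψ (Set.Icc (p₀ - δ) p₀) ∧
      (∀ p ∈ Set.Ico (p₀ - δ) p₀,
        HasDerivWithinAt φ (deriv (fun y => newtonF p y (v' p)) (v p))
          (Set.Icc (p₀ - δ) p₀) p ∧
        HasDerivWithinAt ψ (deriv (fun w => newtonF p (v p) w) (v' p) - φ p)
          (Set.Icc (p₀ - δ) p₀) p) ∧
      (∀ p ∈ Set.Icc (p₀ - δ) p₀, ψ p ≤ 0) ∧
      (∀ p ∈ Set.Ico (p₀ - δ) p₀, ψ p * v'' p = 0) ∧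
      ψ p₀ = 0 ∧
      Filter.Tendsto (fun p => (-(newtonF p (v p) (v' p)) + φ p * v' p) - φ p)
        (nhdsWithin p₀ (Set.Iio p₀)) (nhds 0) := by
  rintro ⟨φ, ψ, hφc, hψc, hder, hψle, hcomp, hψ0, hlim⟩
  set l : Filter ℝ := nhdsWithin p₀ (Set.Ioo (p₀ - δ) p₀) with hl
  have hlt : p₀ - δ < p₀ := by linarith
  have hlne : l.NeBot := right_nhdsWithin_Ioo_neBot hlt
  have hmem : ∀ᶠ p in l, p ∈ Set.Ico (p₀ - δ) p₀ :=
    Filter.eventually_of_mem self_mem_nhdsWithin fun p hp => ⟨le_of_lt hp.1, hp.2⟩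
  have hlIio : l ≤ nhdsWithin p₀ (Set.Iio p₀) :=
    nhdsWithin_mono _ fun p hp => hp.2
  have hlIcc : l ≤ nhdsWithin p₀ (Set.Icc (p₀ - δ) p₀) :=
    nhdsWithin_mono _ fun p hp => ⟨le_of_lt hp.1, le_of_lt hp.2⟩
  have hp₀mem : p₀ ∈ Set.Icc (p₀ - δ) p₀ := ⟨by linarith, le_refl _⟩
  -- basic tendsto facts
  have hid : Filter.Tendsto (fun p : ℝ => p) l (nhds p₀) :=
    Filter.tendsto_id.mono_right nhdsWithin_le_nhds
  have hvcont : ContinuousOn v (Set.Icc (p₀ - δ) p₀) :=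
    fun p hp => (hd1 p hp).continuousWithinAt
  have hv'cont : ContinuousOn v' (Set.Icc (p₀ - δ) p₀) :=
    fun p hp => (hd2 p hp).continuousWithinAt
  have hv : Filter.Tendsto v l (nhds p₀) := by
    have := (hvcont p₀ hp₀mem).tendsto.mono_left hlIcc
    rwa [hvp₀] at this
  have hv' : Filter.Tendsto v' l (nhds (1 - a)) := by
    have := (hv'cont p₀ hp₀mem).tendsto.mono_left hlIcc
    rwa [hv'p₀] at this
  have hφ : Filter.Tendsto φ l (nhds (φ p₀)) :=
    (hφc p₀ hp₀mem).tendsto.mono_left hlIcc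
  -- sqrt term tends to 0
  have hq : Filter.Tendsto (fun p => (v p) ^ 2 - p ^ 2) l (nhds 0) := by
    have := (hv.pow 2).sub (hid.pow 2)
    simpa using this
  have hS : Filter.Tendsto (fun p => Real.sqrt ((v p) ^ 2 - p ^ 2)) l (nhds 0) := by
    have := (Real.continuous_sqrt.tendsto 0).comp hq
    simpa [Function.comp_def] using this
  -- first term of f tends to 0
  have hT1 : Filter.Tendsto
      (fun p => 2 * Real.sqrt ((v p) ^ 2 - p ^ 2) * (v' p) ^ 2 / (1 + (v p) ^ 2) ^ 2)
      l (nhds 0) := by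
    have hden : Filter.Tendsto (fun p => (1 + (v p) ^ 2) ^ 2) l (nhds ((1 + p₀ ^ 2) ^ 2)) := by
      exact (((tendsto_const_nhds : Filter.Tendsto (fun _ : ℝ => (1:ℝ)) l (nhds 1)).add (hv.pow 2)).pow 2)
    have hnum : Filter.Tendsto (fun p => 2 * Real.sqrt ((v p) ^ 2 - p ^ 2) * (v' p) ^ 2)
        l (nhds 0) := by
      have := (((tendsto_const_nhds : Filter.Tendsto (fun _ : ℝ => (2:ℝ)) l (nhds 2)).mul hS).mul (hv'.pow 2))
      simpa using this
    have := hnum.div hden (by positivity)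
    simpa [Pi.div_def] using this
  -- the quotient term tends to +∞
  have hN : Filter.Tendsto (fun p => -(p * v' p - v p)) l (nhds (a * p₀)) := by
    have := ((hid.mul hv').sub hv).neg
    have h2 : -(p₀ * (1 - a) - p₀) = a * p₀ := by ring
    rwa [h2] at this
  have hD : Filter.Tendsto
      (fun p => v p * (1 + (v p) ^ 2) * Real.sqrt ((v p) ^ 2 - p ^ 2)) l
      (nhdsWithin 0 (Set.Ioi 0)) := by
    apply tendsto_nhdsWithin_of_tendsto_nhds_of_eventually_within
    · have := (hv.mul ((tendsto_const_nhds : Filter.Tendsto (fun _ : ℝ => (1:ℝ)) l (nhds 1)).add (hv.pow 2))).mul hS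
      simpa using this
    · filter_upwards [hmem] with p hp
      obtain ⟨h1, h2⟩ := hgt p hp
      have hvpos : 0 < v p := lt_trans h2 h1
      have hsq : 0 < (v p) ^ 2 - p ^ 2 := by nlinarith
      have hSpos : 0 < Real.sqrt ((v p) ^ 2 - p ^ 2) := Real.sqrt_pos.mpr hsq
      exact Set.mem_Ioi.mpr (mul_pos (mul_pos hvpos (by positivity)) hSpos)
  have hDinv : Filter.Tendsto
      (fun p => (v p * (1 + (v p) ^ 2) * Real.sqrt ((v p) ^ 2 - p ^ 2))⁻¹) l
      Filter.atTop := hD.inv_tendsto_nhdsGT_zero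
  have hFtop : Filter.Tendsto (fun p => newtonF p (v p) (v' p)) l Filter.atTop := by
    have hmul : Filter.Tendsto
        (fun p => -(p * v' p - v p) *
          (v p * (1 + (v p) ^ 2) * Real.sqrt ((v p) ^ 2 - p ^ 2))⁻¹) l Filter.atTop :=
      Filter.Tendsto.pos_mul_atTop (mul_pos ha hp₀) hN hDinv
    have := hT1.add_atTop hmul
    refine this.congr fun p => ?_
    simp only [newtonF]
    rw [div_eq_mul_inv]; ring
  -- but f also tends to a finite limit, contradiction
  have hlim' : Filter.Tendsto
      (fun p => (-(newtonF p (v p) (v' p)) + φ p * v' p) - φ p) l (nhds 0) :=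
    hlim.mono_left hlIio
  have hfin : Filter.Tendsto (fun p => newtonF p (v p) (v' p)) l
      (nhds ((φ p₀ * (1 - a) - φ p₀) - 0)) := by
    have h2 : Filter.Tendsto (fun p => φ p * v' p - φ p) l (nhds (φ p₀ * (1 - a) - φ p₀)) :=
      (hφ.mul hv').sub hφ
    have := h2.sub hlim'
    refine this.congr fun p => ?_
    ring
  exact not_tendsto_nhds_of_tendsto_atTop hFtop _ hfin
end

section
/- Let f(p, v, w) = 2√(v² − p²) w²/(1 + v²)² − (pw − v)/(v(1 + v²)√(v² − p²)). Then for all real p, v, w with 0 < p < v: (i) ∂²f/∂w²(p, v, w) = 4√(v² − p²)/(1 + v²)² > 0, and (ii) ∂f/∂v(p, v, w) − ∂²f/∂p∂w(p, v, w) − w · ∂²f/∂v∂w(p, v, w) = ∂²f/∂w²(p, v, w) · ( −(w − 1)²/(4(v − p)) − (w + 1)²/(4(v + p)) + 2vw²/(1 + v²) ). -/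
/-- The `w`-derivative of `newtonF` (holds for all `p v`, junk values included). -/
lemma newtonF_hasDerivAt_w (p v w : ℝ) :
    HasDerivAt (fun w' => newtonF p v w')
      (4 * Real.sqrt (v ^ 2 - p ^ 2) * w / (1 + v ^ 2) ^ 2 -
        p / (v * (1 + v ^ 2) * Real.sqrt (v ^ 2 - p ^ 2))) w := by
  have h1 : HasDerivAt (fun w' : ℝ => 2 * Real.sqrt (v ^ 2 - p ^ 2) * w' ^ 2 / (1 + v ^ 2) ^ 2)
      (2 * Real.sqrt (v ^ 2 - p ^ 2) * (2 * w) / (1 + v ^ 2) ^ 2) w := by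
    simpa using ((hasDerivAt_pow 2 w).const_mul (2 * Real.sqrt (v ^ 2 - p ^ 2))).div_const
      ((1 + v ^ 2) ^ 2)
  have h2 : HasDerivAt (fun w' : ℝ => (p * w' - v) / (v * (1 + v ^ 2) * Real.sqrt (v ^ 2 - p ^ 2)))
      (p / (v * (1 + v ^ 2) * Real.sqrt (v ^ 2 - p ^ 2))) w := by
    simpa using (((hasDerivAt_id w).const_mul p).sub_const v).div_const
      (v * (1 + v ^ 2) * Real.sqrt (v ^ 2 - p ^ 2))
  have h := h1.sub h2
  refine h.congr_deriv ?_
  ring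

lemma newtonF_deriv_w (p v w : ℝ) :
    deriv (fun w' => newtonF p v w') w =
      4 * Real.sqrt (v ^ 2 - p ^ 2) * w / (1 + v ^ 2) ^ 2 -
        p / (v * (1 + v ^ 2) * Real.sqrt (v ^ 2 - p ^ 2)) :=
  (newtonF_hasDerivAt_w p v w).deriv

set_option maxHeartbeats 2000000 in
/-- For `0 < p < v`: (i) `f_ww = 4√(v² − p²)/(1 + v²)² > 0`, and
(ii) `f_v − f_{pw} − w f_{vw} = f_ww · (−(w−1)²/(4(v−p)) − (w+1)²/(4(v+p)) + 2vw²/(1+v²))`,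
the identity from which the Euler–Lagrange equation for singular extremals follows. -/
theorem newtonF_strong_legendre_and_EL_identity :
    ∀ p v w : ℝ, 0 < p → p < v →
      (iteratedDeriv 2 (fun w' => newtonF p v w') w =
          4 * Real.sqrt (v ^ 2 - p ^ 2) / (1 + v ^ 2) ^ 2 ∧
        0 < iteratedDeriv 2 (fun w' => newtonF p v w') w) ∧
      (deriv (fun y => newtonF p y w) v -
          deriv (fun q => deriv (fun w' => newtonF q v w') w) p -
          w * deriv (fun y => deriv (fun w' => newtonF p y w') w) v =
        iteratedDeriv 2 (fun w' => newtonF p v w') w *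
          (-(w - 1) ^ 2 / (4 * (v - p)) - (w + 1) ^ 2 / (4 * (v + p)) +
            2 * v * w ^ 2 / (1 + v ^ 2))) := by
  intro p v w hp hpv
  have hv : 0 < v := hp.trans hpv
  have hvp2 : (0:ℝ) < v ^ 2 - p ^ 2 := by nlinarith
  have hs0 : 0 < Real.sqrt (v ^ 2 - p ^ 2) := Real.sqrt_pos.2 hvp2
  -- Part (i)
  have hiter : iteratedDeriv 2 (fun w' => newtonF p v w') w =
      4 * Real.sqrt (v ^ 2 - p ^ 2) / (1 + v ^ 2) ^ 2 := by
    rw [iteratedDeriv_succ, iteratedDeriv_one]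
    have hfun : deriv (fun w' => newtonF p v w') =
        fun w' => 4 * Real.sqrt (v ^ 2 - p ^ 2) * w' / (1 + v ^ 2) ^ 2 -
          p / (v * (1 + v ^ 2) * Real.sqrt (v ^ 2 - p ^ 2)) :=
      funext fun w' => newtonF_deriv_w p v w'
    rw [hfun]
    have h : HasDerivAt (fun w' : ℝ => 4 * Real.sqrt (v ^ 2 - p ^ 2) * w' / (1 + v ^ 2) ^ 2 -
          p / (v * (1 + v ^ 2) * Real.sqrt (v ^ 2 - p ^ 2)))
        (4 * Real.sqrt (v ^ 2 - p ^ 2) / (1 + v ^ 2) ^ 2) w := by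
      have := (((hasDerivAt_id w).const_mul (4 * Real.sqrt (v ^ 2 - p ^ 2))).div_const
        ((1 + v ^ 2) ^ 2)).sub_const (p / (v * (1 + v ^ 2) * Real.sqrt (v ^ 2 - p ^ 2)))
      refine this.congr_deriv ?_
      ring
    exact h.deriv
  refine ⟨⟨hiter, by rw [hiter]; exact div_pos (by linarith) (by positivity)⟩, ?_⟩
  rw [hiter]
  have hne : v ^ 2 - p ^ 2 ≠ 0 := ne_of_gt hvp2
  -- derivative of sqrt(y^2 - p^2) at v
  have hsqv : HasDerivAt (fun y : ℝ => Real.sqrt (y ^ 2 - p ^ 2))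
      (v / Real.sqrt (v ^ 2 - p ^ 2)) v := by
    have hin : HasDerivAt (fun y : ℝ => y ^ 2 - p ^ 2) (2 * v) v := by
      simpa using (hasDerivAt_pow 2 v).sub_const (p ^ 2)
    have h := (Real.hasDerivAt_sqrt hne).comp v hin
    refine h.congr_deriv ?_
    field_simp
  -- derivative of sqrt(v^2 - q^2) at p
  have hsqp : HasDerivAt (fun q : ℝ => Real.sqrt (v ^ 2 - q ^ 2))
      (-p / Real.sqrt (v ^ 2 - p ^ 2)) p := by
    have hin : HasDerivAt (fun q : ℝ => v ^ 2 - q ^ 2) (-(2 * p)) p := by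
      simpa using ((hasDerivAt_pow 2 p).const_sub (v ^ 2))
    have h := (Real.hasDerivAt_sqrt hne).comp p hin
    refine h.congr_deriv ?_
    field_simp
  have h1v : HasDerivAt (fun y : ℝ => 1 + y ^ 2) (2 * v) v := by
    simpa using (hasDerivAt_pow 2 v).const_add 1
  have hden := h1v.pow 2
  have hdd := ((hasDerivAt_id v).mul h1v).mul hsqv
  have hdenne : ((1 + v ^ 2) ^ 2 : ℝ) ≠ 0 := by positivity
  have hbigne : v * (1 + v ^ 2) * Real.sqrt (v ^ 2 - p ^ 2) ≠ 0 := by positivity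
  -- D_v of newtonF
  have hDv : HasDerivAt (fun y => newtonF p y w) _ v :=
    ((((hsqv.const_mul 2).mul_const (w ^ 2)).div hden hdenne).sub
      (((hasDerivAt_id v).const_sub (p * w)).div hdd hbigne))
  -- rewrite the inner w-derivatives
  have e1 : (fun q => deriv (fun w' => newtonF q v w') w) = fun q =>
      4 * Real.sqrt (v ^ 2 - q ^ 2) * w / (1 + v ^ 2) ^ 2 -
        q / (v * (1 + v ^ 2) * Real.sqrt (v ^ 2 - q ^ 2)) :=
    funext fun q => newtonF_deriv_w q v w
  have e2 : (fun y => deriv (fun w' => newtonF p y w') w) = fun y =>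
      4 * Real.sqrt (y ^ 2 - p ^ 2) * w / (1 + y ^ 2) ^ 2 -
        p / (y * (1 + y ^ 2) * Real.sqrt (y ^ 2 - p ^ 2)) :=
    funext fun y => newtonF_deriv_w p y w
  -- D_p of f_w
  have hDp : HasDerivAt (fun q : ℝ =>
      4 * Real.sqrt (v ^ 2 - q ^ 2) * w / (1 + v ^ 2) ^ 2 -
        q / (v * (1 + v ^ 2) * Real.sqrt (v ^ 2 - q ^ 2))) _ p :=
    ((((hsqp.const_mul 4).mul_const w).div_const ((1 + v ^ 2) ^ 2)).sub
      ((hasDerivAt_id p).div (hsqp.const_mul (v * (1 + v ^ 2))) hbigne))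
  -- D_v of f_w
  have hDvw : HasDerivAt (fun y : ℝ =>
      4 * Real.sqrt (y ^ 2 - p ^ 2) * w / (1 + y ^ 2) ^ 2 -
        p / (y * (1 + y ^ 2) * Real.sqrt (y ^ 2 - p ^ 2))) _ v :=
    ((((hsqv.const_mul 4).mul_const w).div hden hdenne).sub
      ((hasDerivAt_const v p).div hdd hbigne))
  rw [e1, e2, hDv.deriv, hDp.deriv, hDvw.deriv]
  have hs2 : Real.sqrt (v ^ 2 - p ^ 2) ^ 2 = v ^ 2 - p ^ 2 := Real.sq_sqrt hvp2.le
  set s := Real.sqrt (v ^ 2 - p ^ 2) with hsdef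
  have hsne : s ≠ 0 := ne_of_gt hs0
  have hvne : v ≠ 0 := ne_of_gt hv
  have h1vne : (1 + v ^ 2 : ℝ) ≠ 0 := by positivity
  have hvmp : v - p ≠ 0 := by linarith
  have hvpp : v + p ≠ 0 := by positivity
  simp only [Pi.pow_apply, Pi.mul_apply, id, Nat.cast_ofNat] at hDv hDvw hDp ⊢
  field_simp
  simp only [Pi.pow_apply, Pi.mul_apply, id, Nat.cast_ofNat] at *
  norm_num at *
  have hs4 : s ^ 4 = (v ^ 2 - p ^ 2) ^ 2 := by rw [← hs2]; ring
  rw [hs4, hs2]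
  ring
end

section
/- Let p₀ > 0 with p₀ ≠ 1/√3, let δ > 0, and let v be a real-analytic (or C³) function on [p₀ − δ, p₀] with v(p₀) = p₀, v'(p₀) = 1, v(p) > p for p ∈ [p₀ − δ, p₀), satisfying the Euler–Lagrange equation v''(p) = −¼(v'(p) − 1)²/(v(p) − p) − ¼(v'(p) + 1)²/(v(p) + p) + 2v(p)v'(p)²/(1 + v(p)²) for all p ∈ [p₀ − δ, p₀). Then v''(p₀) = (3p₀² − 1)/(3p₀(1 + p₀²)) and v'''(p₀) = (3p₀⁴ + 2p₀² + 1)/(2p₀²(1 + p₀²)²). -/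
open Filter Set Topology

private lemma slope_tendsto_left {f : ℝ → ℝ} {f' a δ : ℝ} (hδ : 0 < δ)
    (hf : HasDerivWithinAt f f' (Set.Icc (a - δ) a) a) :
    Filter.Tendsto (fun p => (f p - f a) / (p - a)) (𝓝[<] a) (𝓝 f') := by
  rw [hasDerivWithinAt_iff_tendsto_slope] at hf
  have hle : 𝓝[<] a ≤ 𝓝[Set.Icc (a - δ) a \ {a}] a := by
    rw [← nhdsWithin_Ioo_eq_nhdsLT (show a - δ < a by linarith)]
    exact nhdsWithin_mono _ (fun x hx => ⟨⟨hx.1.le, hx.2.le⟩, ne_of_lt hx.2⟩)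
  exact (hf.mono_left hle).congr (fun p => (slope_def_field f a p))

set_option maxHeartbeats 1000000 in
/-- (Endpoint derivatives of singular extremals.) If `v ∈ C³[p₀ − δ, p₀]`
satisfies `v(p₀) = p₀`, `v'(p₀) = 1`, `v(p) > p` for `p < p₀` and the Euler–Lagrange
equation `v'' = −¼(v'−1)²/(v−p) − ¼(v'+1)²/(v+p) + 2vv'²/(1+v²)` on `[p₀ − δ, p₀)`,
where `p₀ > 0`, `p₀ ≠ 1/√3`, then `v''(p₀) = (3p₀² − 1)/(3p₀(1 + p₀²))` and
`v'''(p₀) = (3p₀⁴ + 2p₀² + 1)/(2p₀²(1 + p₀²)²)`. -/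
theorem singular_extremal_endpoint_derivatives
    (p₀ δ : ℝ) (hp₀ : 0 < p₀) (hp₀' : p₀ ≠ 1 / Real.sqrt 3) (hδ : 0 < δ)
    (v v1 v2 v3 : ℝ → ℝ)
    (hd1 : ∀ p ∈ Set.Icc (p₀ - δ) p₀, HasDerivWithinAt v (v1 p) (Set.Icc (p₀ - δ) p₀) p)
    (hd2 : ∀ p ∈ Set.Icc (p₀ - δ) p₀, HasDerivWithinAt v1 (v2 p) (Set.Icc (p₀ - δ) p₀) p)
    (hd3 : ∀ p ∈ Set.Icc (p₀ - δ) p₀, HasDerivWithinAt v2 (v3 p) (Set.Icc (p₀ - δ) p₀) p)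
    (hc3 : ContinuousOn v3 (Set.Icc (p₀ - δ) p₀))
    (hvp₀ : v p₀ = p₀) (hv1p₀ : v1 p₀ = 1)
    (hgt : ∀ p ∈ Set.Ico (p₀ - δ) p₀, p < v p)
    (heq : ∀ p ∈ Set.Ico (p₀ - δ) p₀,
      v2 p = -(1 / 4) * (v1 p - 1) ^ 2 / (v p - p) - (1 / 4) * (v1 p + 1) ^ 2 / (v p + p) +
        2 * v p * (v1 p) ^ 2 / (1 + (v p) ^ 2)) :
    v2 p₀ = (3 * p₀ ^ 2 - 1) / (3 * p₀ * (1 + p₀ ^ 2)) ∧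
    v3 p₀ = (3 * p₀ ^ 4 + 2 * p₀ ^ 2 + 1) / (2 * p₀ ^ 2 * (1 + p₀ ^ 2) ^ 2) := by
  have hp₀δ : p₀ - δ < p₀ := by linarith
  have hmem : p₀ ∈ Set.Icc (p₀ - δ) p₀ := ⟨by linarith, le_refl _⟩
  have hIooI : Set.Ioo (p₀ - δ) p₀ ⊆ Set.Icc (p₀ - δ) p₀ := Set.Ioo_subset_Icc_self
  have hp₀sq : (0:ℝ) < 1 + p₀ ^ 2 := by positivity
  set l := 𝓝[<] p₀ with hldef
  have hev : ∀ᶠ p in l, p ∈ Set.Ioo (p₀ - δ) p₀ :=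
    Filter.eventually_of_mem (Ioo_mem_nhdsLT hp₀δ) (fun x hx => hx)
  have hlleI : l ≤ 𝓝[Set.Icc (p₀ - δ) p₀] p₀ := by
    rw [hldef, ← nhdsWithin_Ioo_eq_nhdsLT hp₀δ]
    exact nhdsWithin_mono _ hIooI
  -- limits of v, v1, v2 from continuity
  have hid : Filter.Tendsto (fun p : ℝ => p) l (𝓝 p₀) := tendsto_id.mono_left nhdsWithin_le_nhds
  have hcv : Filter.Tendsto v l (𝓝 p₀) := by
    have h : Filter.Tendsto v (𝓝[Set.Icc (p₀ - δ) p₀] p₀) (𝓝 (v p₀)) :=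
      (hd1 p₀ hmem).continuousWithinAt
    rw [hvp₀] at h; exact h.mono_left hlleI
  have hcv1 : Filter.Tendsto v1 l (𝓝 1) := by
    have h : Filter.Tendsto v1 (𝓝[Set.Icc (p₀ - δ) p₀] p₀) (𝓝 (v1 p₀)) :=
      (hd2 p₀ hmem).continuousWithinAt
    rw [hv1p₀] at h; exact h.mono_left hlleI
  set c := v2 p₀ with hcdef
  have hcv2 : Filter.Tendsto v2 l (𝓝 c) := by
    have h : Filter.Tendsto v2 (𝓝[Set.Icc (p₀ - δ) p₀] p₀) (𝓝 (v2 p₀)) :=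
      (hd3 p₀ hmem).continuousWithinAt
    exact h.mono_left hlleI
  -- slope limit of v1 at p₀
  have hs1 : Filter.Tendsto (fun p => (v1 p - 1) / (p - p₀)) l (𝓝 c) := by
    have h := slope_tendsto_left hδ (hd2 p₀ hmem)
    rw [hv1p₀] at h; exact h
  clear_value c
  -- eventual HasDerivAt for v
  have hder1 : ∀ᶠ p in l, HasDerivAt v (v1 p) p := by
    filter_upwards [hev] with p hp
    exact (hd1 p (hIooI hp)).hasDerivAt (Icc_mem_nhds hp.1 hp.2)
  -- L'Hopital : (v p - p)/(p-p₀)^2 → c/2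
  have hW2 : Filter.Tendsto (fun p => (v p - p) / (p - p₀) ^ 2) l (𝓝 (c / 2)) := by
    apply HasDerivAt.lhopital_zero_nhdsLT (f' := fun p => v1 p - 1)
      (g' := fun p => 2 * (p - p₀))
    · filter_upwards [hder1] with p hp
      exact hp.sub (hasDerivAt_id p)
    · refine Filter.Eventually.of_forall (fun p => ?_)
      have hh := ((hasDerivAt_id p).sub_const p₀).pow 2; simp at hh; exact hh
    · filter_upwards [self_mem_nhdsWithin] with p (hp : p < p₀)
      have : 2 * (p - p₀) < 0 := by linarith
      exact ne_of_lt this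
    · simpa using hcv.sub hid
    · have h : Filter.Tendsto (fun p : ℝ => (p - p₀) ^ 2) (𝓝 p₀) (𝓝 ((p₀ - p₀) ^ 2)) :=
        ((continuous_id.sub continuous_const).pow 2).tendsto p₀
      simpa using h.mono_left nhdsWithin_le_nhds
    · have h := hs1.div_const 2
      refine h.congr (fun p => ?_)
      rw [div_div, mul_comm]
  -- names for the three terms
  set A : ℝ → ℝ := fun p => (v1 p - 1) ^ 2 / (v p - p) with hAdef
  set B : ℝ → ℝ := fun p => (v1 p + 1) ^ 2 / (v p + p) with hBdef
  set C : ℝ → ℝ := fun p => 2 * v p * (v1 p) ^ 2 / (1 + (v p) ^ 2) with hCdef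
  have hevW : ∀ᶠ p in l, 0 < v p - p := by
    filter_upwards [hev] with p hp
    have := hgt p ⟨hp.1.le, hp.2⟩; linarith
  have hv2eq : ∀ᶠ p in l, v2 p = -(1/4) * A p - (1/4) * B p + C p := by
    filter_upwards [hev] with p hp
    have e := heq p ⟨hp.1.le, hp.2⟩
    rw [e]; simp only [hAdef, hBdef, hCdef]; ring
  have hAeq : ∀ᶠ p in l, A p = -4 * v2 p - B p + 4 * C p := by
    filter_upwards [hv2eq] with p hp
    linarith
  have limB : Filter.Tendsto B l (𝓝 (2 / p₀)) := by
    have h1 : Filter.Tendsto (fun p => (v1 p + 1) ^ 2) l (𝓝 ((1 + 1) ^ 2)) :=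
      (hcv1.add tendsto_const_nhds).pow 2
    have h2 : Filter.Tendsto (fun p => v p + p) l (𝓝 (p₀ + p₀)) := hcv.add hid
    have h := h1.div h2 (by linarith : p₀ + p₀ ≠ 0)
    have hval : ((1:ℝ) + 1) ^ 2 / (p₀ + p₀) = 2 / p₀ := by
      field_simp; ring
    rw [hval] at h; exact h
  have limC : Filter.Tendsto C l (𝓝 (2 * p₀ / (1 + p₀ ^ 2))) := by
    have h1 : Filter.Tendsto (fun p => 2 * v p * (v1 p) ^ 2) l (𝓝 (2 * p₀ * 1 ^ 2)) :=
      ((hcv.const_mul 2).mul (hcv1.pow 2))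
    have h2 : Filter.Tendsto (fun p => 1 + (v p) ^ 2) l (𝓝 (1 + p₀ ^ 2)) :=
      tendsto_const_nhds.add (hcv.pow 2)
    have h := h1.div h2 (ne_of_gt hp₀sq)
    have hval : 2 * p₀ * (1:ℝ) ^ 2 / (1 + p₀ ^ 2) = 2 * p₀ / (1 + p₀ ^ 2) := by ring_nf
    rw [hval] at h; exact h
  set L : ℝ := -4 * c - 2 / p₀ + 4 * (2 * p₀ / (1 + p₀ ^ 2)) with hLdef
  clear_value L
  have limA : Filter.Tendsto A l (𝓝 L) := by
    rw [hLdef]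
    have h := ((hcv2.const_mul (-4)).sub limB).add (limC.const_mul 4)
    refine (h.congr' ?_)
    filter_upwards [hAeq] with p hp
    rw [hp]
  have hLnonneg : 0 ≤ L := by
    refine ge_of_tendsto limA ?_
    filter_upwards [hevW] with p hp
    simp only [hAdef]
    positivity
  -- the key claim: c ≠ 0
  have hcne : c ≠ 0 := by
    intro hczero
    -- Landau-type bound shows L ≤ 4ε for all ε > 0
    have hL4ε : ∀ ε : ℝ, 0 < ε → L ≤ 4 * ε := by
      intro ε hε
      have hcont : ContinuousWithinAt v2 (Set.Icc (p₀ - δ) p₀) p₀ :=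
        (hd3 p₀ hmem).continuousWithinAt
      rw [Metric.continuousWithinAt_iff] at hcont
      obtain ⟨η, hη, hηv⟩ := hcont ε hε
      set η₀ := min (η / 2) δ with hη₀def
      have hη₀ : 0 < η₀ := lt_min (by linarith) hδ
      have hη₀δ : η₀ ≤ δ := min_le_right _ _
      have hη₀η : η₀ ≤ η / 2 := min_le_left _ _
      set J := Set.Icc (p₀ - η₀) p₀ with hJdef
      have hJI : J ⊆ Set.Icc (p₀ - δ) p₀ := Set.Icc_subset_Icc_left (by linarith)
      have hv2b : ∀ q ∈ J, |v2 q| ≤ ε := by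
        intro q hq
        have hq1 := hq.1; have hq2 := hq.2
        have hdist : dist q p₀ < η := by
          rw [Real.dist_eq, abs_of_nonpos (by linarith)]
          linarith
        have h := hηv (hJI hq) hdist
        rw [Real.dist_eq, ← hcdef, hczero, sub_zero] at h
        exact h.le
      have hdJ1 : ∀ x ∈ J, HasDerivWithinAt v1 (v2 x) J x :=
        fun x hx => (hd2 x (hJI hx)).mono hJI
      have hv1lip : ∀ p ∈ J, ∀ q ∈ J, |v1 q - v1 p| ≤ ε * |q - p| := by
        intro p hp q hq
        have h := (convex_Icc _ _).norm_image_sub_le_of_norm_hasDerivWithin_le hdJ1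
          (fun x hx => by simpa using hv2b x hx) hp hq
        simpa [Real.norm_eq_abs] using h
      have hw'b : ∀ p ∈ J, |v1 p - 1| ≤ ε * (p₀ - p) := by
        intro p hp
        have h := hv1lip p hp p₀ ⟨by linarith, le_refl _⟩
        rw [hv1p₀, abs_sub_comm] at h
        rwa [abs_of_nonneg (show (0:ℝ) ≤ p₀ - p by linarith [hp.2])] at h
      have hevA : ∀ᶠ p in l, A p ≤ 4 * ε := by
        have h23 : p₀ - 2 * η₀ / 3 < p₀ := by linarith
        filter_upwards [Filter.eventually_of_mem (Ioo_mem_nhdsLT h23)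
          (fun x hx => hx)] with p hp
        have hpJ : p ∈ J := ⟨by linarith [hp.1], hp.2.le⟩
        set a := v1 p - 1 with hadef
        have ha : |a| ≤ ε * (p₀ - p) := hw'b p hpJ
        set q := p - a / (2 * ε) with hqdef
        clear_value a q
        have habs : |a / (2 * ε)| ≤ (p₀ - p) / 2 := by
          rw [abs_div, abs_of_pos (by linarith : (0:ℝ) < 2 * ε),
            div_le_div_iff₀ (by linarith) (by norm_num)]
          nlinarith
        have habs' := abs_le.1 habs
        have hq1 : q ≤ p₀ := by
          have := habs'.1; simp only [hqdef]
          have hpp : p < p₀ := hp.2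
          linarith
        have hq2 : p₀ - η₀ ≤ q := by
          have := habs'.2; simp only [hqdef]
          have := hp.1
          linarith
        have hqJ : q ∈ J := ⟨hq2, hq1⟩
        have hsub : Set.uIcc p q ⊆ J := (Set.ordConnected_Icc).uIcc_subset hpJ hqJ
        have hg : ∀ x ∈ Set.uIcc p q,
            HasDerivWithinAt (fun y => v y - y - a * y) (v1 x - v1 p)
              (Set.uIcc p q) x := by
          intro x hx
          have h1 := (hd1 x (hJI (hsub hx))).mono (hsub.trans hJI)
          have h2 := (h1.sub (hasDerivWithinAt_id x _)).sub
            ((hasDerivWithinAt_id x _).const_mul a)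
          have h3 : v1 x - v1 p = v1 x - 1 - a * 1 := by rw [hadef]; ring
          rw [h3]
          exact h2
        have hgb : ∀ x ∈ Set.uIcc p q, ‖v1 x - v1 p‖ ≤ ε * |q - p| := by
          intro x hx
          have h1 := hv1lip p hpJ x (hsub hx)
          have h2 : |x - p| ≤ |q - p| := by
            rw [Set.mem_uIcc] at hx
            rcases hx with ⟨h1x, h2x⟩ | ⟨h1x, h2x⟩
            · rw [abs_of_nonneg (by linarith), abs_of_nonneg (by linarith)]; linarith
            · rw [abs_of_nonpos (by linarith), abs_of_nonpos (by linarith)]; linarith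
          rw [Real.norm_eq_abs]
          exact h1.trans (mul_le_mul_of_nonneg_left h2 hε.le)
        have hkey := (convex_uIcc p q).norm_image_sub_le_of_norm_hasDerivWithin_le hg hgb
          Set.left_mem_uIcc Set.right_mem_uIcc
        rw [Real.norm_eq_abs, Real.norm_eq_abs] at hkey
        have hwq : 0 ≤ v q - q := by
          rcases eq_or_lt_of_le hq1 with heq' | hlt
          · rw [heq', hvp₀]; simp
          · have := hgt q ⟨by linarith, hlt⟩; linarith
        have hwp : 0 < v p - p := by
          have := hgt p ⟨by linarith [hp.1], hp.2⟩; linarith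
        have hqp : q - p = -(a / (2 * ε)) := by rw [hqdef]; ring
        have haqp : a * (q - p) = -(a ^ 2 / (2 * ε)) := by
          rw [hqp]; field_simp
        have hEq : |q - p| = |a| / (2 * ε) := by
          rw [hqp, abs_neg, abs_div, abs_of_pos (by linarith : (0:ℝ) < 2 * ε)]
        have hE : ε * |q - p| * |q - p| = a ^ 2 / (4 * ε) := by
          rw [mul_assoc, abs_mul_abs_self, hqp]
          field_simp
          ring
        have hup := (le_abs_self _).trans hkey
        rw [hE] at hup
        have hexp : v q - q - a * q - (v p - p - a * p)
            = (v q - q) - (v p - p) - a * (q - p) := by ring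
        rw [hexp, haqp] at hup
        have h4 : a ^ 2 / (2 * ε) = a ^ 2 / (4 * ε) + a ^ 2 / (4 * ε) := by ring
        have hwpge : a ^ 2 / (4 * ε) ≤ v p - p := by linarith [hwq, hup, h4]
        have h4ε : (0:ℝ) < 4 * ε := by linarith
        have hfin := (div_le_iff₀ h4ε).1 hwpge
        simp only [hAdef]
        rw [← hadef, div_le_iff₀ hwp]
        nlinarith [hfin]
      exact le_of_tendsto limA hevA
    have hL0 : L ≤ 0 := by
      by_contra h
      push_neg at h
      have := hL4ε (L / 8) (by linarith)
      linarith
    have hLzero : L = 0 := le_antisymm hL0 hLnonneg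
    have hsq : p₀ ^ 2 = 1 / 3 := by
      rw [hLdef, hczero] at hLzero
      have h1 : p₀ ≠ 0 := ne_of_gt hp₀
      field_simp at hLzero
      nlinarith [hLzero]
    have : p₀ = 1 / Real.sqrt 3 := by
      have h := Real.sqrt_sq hp₀.le
      rw [hsq] at h
      rw [← h, show (1:ℝ)/3 = ((3:ℝ))⁻¹ by norm_num, Real.sqrt_inv, one_div]
    exact hp₀' this
  -- now c ≠ 0 : compute the limit of A a second way
  have limA2 : Filter.Tendsto A l (𝓝 (c ^ 2 / (c / 2))) := by
    have h := (hs1.pow 2).div hW2 (by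
      intro h0
      exact hcne (by linarith [h0] : c = 0))
    refine h.congr' ?_
    filter_upwards [hev, hevW] with p hp hw
    have hs : p - p₀ ≠ 0 := by
      have : p < p₀ := hp.2; intro h0; linarith [sub_eq_zero.1 h0]
    have hwne : v p - p ≠ 0 := ne_of_gt hw
    show ((v1 p - 1) / (p - p₀)) ^ 2 / ((v p - p) / (p - p₀) ^ 2)
        = (v1 p - 1) ^ 2 / (v p - p)
    field_simp
  have hLval : L = 2 * c := by
    have h : c ^ 2 / (c / 2) = 2 * c := by
      field_simp
    rw [h] at limA2
    exact tendsto_nhds_unique limA limA2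
  have hp₀ne : p₀ ≠ 0 := ne_of_gt hp₀
  have hsqne : (1:ℝ) + p₀ ^ 2 ≠ 0 := ne_of_gt hp₀sq
  have hcval : c = (3 * p₀ ^ 2 - 1) / (3 * p₀ * (1 + p₀ ^ 2)) := by
    rw [hLdef] at hLval
    field_simp at hLval ⊢
    linarith
  refine ⟨hcval, ?_⟩
  -- Part 2: the third derivative
  set d := v3 p₀ with hddef
  have hcne' : c / 2 ≠ 0 := by
    intro h0; exact hcne (by linarith)
  -- slope limit of v2
  have hs2 : Filter.Tendsto (fun p => (v2 p - c) / (p - p₀)) l (𝓝 d) := by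
    have h := slope_tendsto_left hδ (hd3 p₀ hmem)
    rw [← hcdef] at h
    exact h
  have hevs : ∀ᶠ p in l, p - p₀ ≠ 0 := by
    filter_upwards [self_mem_nhdsWithin] with p (hp : p < p₀)
    intro h0; linarith [sub_eq_zero.1 h0]
  -- second-order expansion of v1
  have r2 : Filter.Tendsto (fun p => (v1 p - 1 - c * (p - p₀)) / (p - p₀) ^ 2) l
      (𝓝 (d / 2)) := by
    apply HasDerivAt.lhopital_zero_nhdsLT (f' := fun p => v2 p - c)
      (g' := fun p => 2 * (p - p₀))
    · filter_upwards [hev] with p hp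
      have h1 := (hd2 p (hIooI hp)).hasDerivAt (Icc_mem_nhds hp.1 hp.2)
      have h2 := (h1.sub_const 1).sub (((hasDerivAt_id p).sub_const p₀).const_mul c)
      simp at h2; exact h2
    · refine Filter.Eventually.of_forall (fun p => ?_)
      have hh := ((hasDerivAt_id p).sub_const p₀).pow 2; simp at hh; exact hh
    · filter_upwards [self_mem_nhdsWithin] with p (hp : p < p₀)
      exact ne_of_lt (by linarith)
    · have h1 : Filter.Tendsto (fun p => c * (p - p₀)) l (𝓝 (c * (p₀ - p₀))) :=
        ((hid.sub_const p₀).const_mul c)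
      have h2 := (hcv1.sub_const 1).sub h1
      simpa using h2
    · have h : Filter.Tendsto (fun p : ℝ => (p - p₀) ^ 2) (𝓝 p₀) (𝓝 ((p₀ - p₀) ^ 2)) :=
        ((continuous_id.sub continuous_const).pow 2).tendsto p₀
      simpa using h.mono_left nhdsWithin_le_nhds
    · have h := hs2.div_const 2
      refine h.congr ?_
      intro p
      rw [div_div, mul_comm]
  -- third-order expansion of v
  have r3 : Filter.Tendsto (fun p => (v p - p - c / 2 * (p - p₀) ^ 2) / (p - p₀) ^ 3) l
      (𝓝 (d / 6)) := by
    apply HasDerivAt.lhopital_zero_nhdsLT (f' := fun p => v1 p - 1 - c * (p - p₀))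
      (g' := fun p => 3 * (p - p₀) ^ 2)
    · filter_upwards [hder1] with p hp
      have h2 := (hp.sub (hasDerivAt_id p)).sub
        ((((hasDerivAt_id p).sub_const p₀).pow 2).const_mul (c / 2))
      have h3 : v1 p - 1 - c * (p - p₀) = v1 p - 1 - c / 2 * (2 * (p - p₀) ^ 1 * 1) := by ring
      rw [h3]
      simp at h2 ⊢; exact h2
    · refine Filter.Eventually.of_forall (fun p => ?_)
      have h := ((hasDerivAt_id p).sub_const p₀).pow 3
      have h3 : (3:ℝ) * (p - p₀) ^ 2 = 3 * (p - p₀) ^ (3 - 1) * 1 := by ring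
      rw [h3]
      simp at h ⊢; exact h
    · filter_upwards [self_mem_nhdsWithin] with p (hp : p < p₀)
      have hne : p - p₀ ≠ 0 := by intro h0; linarith [sub_eq_zero.1 h0]
      exact mul_ne_zero three_ne_zero (pow_ne_zero 2 hne)
    · have h1 : Filter.Tendsto (fun p => c / 2 * (p - p₀) ^ 2) l
          (𝓝 (c / 2 * (p₀ - p₀) ^ 2)) := (((hid.sub_const p₀).pow 2).const_mul (c / 2))
      have h2 := (hcv.sub hid).sub h1
      simpa using h2
    · have h : Filter.Tendsto (fun p : ℝ => (p - p₀) ^ 3) (𝓝 p₀) (𝓝 ((p₀ - p₀) ^ 3)) :=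
        ((continuous_id.sub continuous_const).pow 3).tendsto p₀
      simpa using h.mono_left nhdsWithin_le_nhds
    · have h := (r2.div_const 3)
      rw [show d / 2 / 3 = d / 6 by ring] at h
      refine h.congr (fun p => ?_)
      rw [div_div]
      ring_nf
  -- first order limit of (v1 + extra)
  have hplus : Filter.Tendsto (fun p => (v1 p - 1 + c * (p - p₀)) / (p - p₀)) l
      (𝓝 (c + c)) := by
    have h := hs1.add (tendsto_const_nhds (x := c))
    refine h.congr' ?_
    filter_upwards [hevs] with p hp
    field_simp
  -- numerator limit
  have limN : Filter.Tendsto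
      (fun p => ((v1 p - 1) ^ 2 - 2 * c * (v p - p)) / (p - p₀) ^ 3) l
      (𝓝 (d / 2 * (c + c) - 2 * c * (d / 6))) := by
    have h := (r2.mul hplus).sub (r3.const_mul (2 * c))
    refine h.congr' ?_
    filter_upwards [hevs] with p hp
    field_simp
    ring
  -- slope limit of A
  have limA' : Filter.Tendsto (fun p => (A p - 2 * c) / (p - p₀)) l
      (𝓝 ((d / 2 * (c + c) - 2 * c * (d / 6)) / (c / 2))) := by
    have h := limN.div hW2 hcne'
    refine h.congr' ?_
    filter_upwards [hevs, hevW] with p hp hw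
    have hwne : v p - p ≠ 0 := ne_of_gt hw
    show ((v1 p - 1) ^ 2 - 2 * c * (v p - p)) / (p - p₀) ^ 3 / ((v p - p) / (p - p₀) ^ 2)
        = (A p - 2 * c) / (p - p₀)
    simp only [hAdef]
    field_simp
  have hA'val : (d / 2 * (c + c) - 2 * c * (d / 6)) / (c / 2) = 4 * d / 3 := by
    field_simp
    ring
  rw [hA'val] at limA'
  -- derivative of B at p₀
  have hBd : HasDerivWithinAt B
      ((2 * (v1 p₀ + 1) ^ 1 * v2 p₀ * (v p₀ + p₀) - (v1 p₀ + 1) ^ 2 * (v1 p₀ + 1)) /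
        (v p₀ + p₀) ^ 2) (Set.Icc (p₀ - δ) p₀) p₀ := by
    have h1 := ((hd2 p₀ hmem).add_const 1).pow 2
    have h2 := (hd1 p₀ hmem).add (hasDerivWithinAt_id p₀ _)
    have hne : v p₀ + p₀ ≠ 0 := by rw [hvp₀]; intro h0; linarith
    have h3 := h1.div h2 hne
    refine h3.congr_deriv ?_
    change (((2:ℕ):ℝ) * (v1 p₀ + 1) ^ (2 - 1) * v2 p₀ * (v p₀ + p₀) - (v1 p₀ + 1) ^ 2 * (v1 p₀ + 1)) / (v p₀ + p₀) ^ 2 = _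
    norm_num
  have hBp₀ : B p₀ = 2 / p₀ := by
    simp only [hBdef]
    rw [hvp₀, hv1p₀]
    rw [div_eq_div_iff (by linarith) hp₀ne]
    ring
  have sB : Filter.Tendsto (fun p => (B p - 2 / p₀) / (p - p₀)) l
      (𝓝 (2 * (c * p₀ - 1) / p₀ ^ 2)) := by
    have h := slope_tendsto_left hδ hBd
    rw [hBp₀] at h
    have hval : (2 * (v1 p₀ + 1) ^ 1 * v2 p₀ * (v p₀ + p₀) - (v1 p₀ + 1) ^ 2 * (v1 p₀ + 1)) /
        (v p₀ + p₀) ^ 2 = 2 * (c * p₀ - 1) / p₀ ^ 2 := by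
      rw [hvp₀, hv1p₀, ← hcdef]
      rw [div_eq_div_iff (by positivity) (by positivity)]
      ring
    rw [hval] at h
    exact h
  -- derivative of C at p₀
  have hCd : HasDerivWithinAt C
      (((2 * v1 p₀ * (v1 p₀) ^ 2 + 2 * v p₀ * (2 * (v1 p₀) ^ 1 * v2 p₀)) * (1 + (v p₀) ^ 2) -
        2 * v p₀ * (v1 p₀) ^ 2 * (2 * (v p₀) ^ 1 * v1 p₀)) / (1 + (v p₀) ^ 2) ^ 2)
      (Set.Icc (p₀ - δ) p₀) p₀ := by
    have h1 := ((hd1 p₀ hmem).const_mul 2).mul ((hd2 p₀ hmem).pow 2)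
    have h2 := (hasDerivWithinAt_const p₀ _ 1).add ((hd1 p₀ hmem).pow 2)
    have hne : 1 + (v p₀) ^ 2 ≠ 0 := by positivity
    have h3 := h1.div h2 hne
    have h4 : (2 * v1 p₀ * (v1 p₀) ^ 2 + 2 * v p₀ * (2 * (v1 p₀) ^ 1 * v2 p₀)) =
        2 * v1 p₀ * v1 p₀ ^ 2 + 2 * v p₀ * (2 * v1 p₀ ^ 1 * v2 p₀) := by ring
    refine h3.congr_deriv ?_
    change ((2 * v1 p₀ * v1 p₀ ^ 2 + 2 * v p₀ * (((2:ℕ):ℝ) * v1 p₀ ^ (2 - 1) * v2 p₀)) * (1 + v p₀ ^ 2) -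
        (2 * v p₀ * v1 p₀ ^ 2) * (0 + ((2:ℕ):ℝ) * v p₀ ^ (2 - 1) * v1 p₀)) / (1 + v p₀ ^ 2) ^ 2 = _
    norm_num
  have hCp₀ : C p₀ = 2 * p₀ / (1 + p₀ ^ 2) := by
    simp only [hCdef]
    rw [hvp₀, hv1p₀]
    ring_nf
  have sC : Filter.Tendsto (fun p => (C p - 2 * p₀ / (1 + p₀ ^ 2)) / (p - p₀)) l
      (𝓝 ((2 * (1 + 2 * p₀ * c) * (1 + p₀ ^ 2) - 4 * p₀ ^ 2) / (1 + p₀ ^ 2) ^ 2)) := by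
    have h := slope_tendsto_left hδ hCd
    rw [hCp₀] at h
    have hval : ((2 * v1 p₀ * (v1 p₀) ^ 2 + 2 * v p₀ * (2 * (v1 p₀) ^ 1 * v2 p₀)) *
          (1 + (v p₀) ^ 2) - 2 * v p₀ * (v1 p₀) ^ 2 * (2 * (v p₀) ^ 1 * v1 p₀)) /
          (1 + (v p₀) ^ 2) ^ 2
        = (2 * (1 + 2 * p₀ * c) * (1 + p₀ ^ 2) - 4 * p₀ ^ 2) / (1 + p₀ ^ 2) ^ 2 := by
      rw [hvp₀, hv1p₀, ← hcdef]
      rw [div_eq_div_iff (by positivity) (by positivity)]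
      ring
    rw [hval] at h
    exact h
  -- the constant identity satisfied by c
  have hkey : c = -(1/4) * (2 * c) - (1/4) * (2 / p₀) + 2 * p₀ / (1 + p₀ ^ 2) := by
    rw [hcval]
    field_simp
    ring
  -- eventual identity for the difference quotients
  have hevEq : ∀ᶠ p in l, (v2 p - c) / (p - p₀)
      = -(1/4) * ((A p - 2 * c) / (p - p₀)) - (1/4) * ((B p - 2 / p₀) / (p - p₀))
        + ((C p - 2 * p₀ / (1 + p₀ ^ 2)) / (p - p₀)) := by
    filter_upwards [hv2eq] with p hp
    have hnum : v2 p - c = -(1/4) * (A p - 2 * c) - (1/4) * (B p - 2 / p₀)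
        + (C p - 2 * p₀ / (1 + p₀ ^ 2)) := by
      rw [hp]
      nth_rewrite 1 [hkey]
      ring
    rw [hnum]
    ring
  -- combine
  have limRHS : Filter.Tendsto (fun p =>
      -(1/4) * ((A p - 2 * c) / (p - p₀)) - (1/4) * ((B p - 2 / p₀) / (p - p₀))
        + ((C p - 2 * p₀ / (1 + p₀ ^ 2)) / (p - p₀))) l
      (𝓝 (-(1/4) * (4 * d / 3) - (1/4) * (2 * (c * p₀ - 1) / p₀ ^ 2)
        + (2 * (1 + 2 * p₀ * c) * (1 + p₀ ^ 2) - 4 * p₀ ^ 2) / (1 + p₀ ^ 2) ^ 2)) :=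
    ((limA'.const_mul (-(1/4))).sub (sB.const_mul (1/4))).add sC
  have hs2' := hs2.congr' hevEq
  have hdeq := tendsto_nhds_unique hs2' limRHS
  -- final algebra
  rw [hcval] at hdeq
  rw [eq_div_iff (by positivity : 2 * p₀ ^ 2 * (1 + p₀ ^ 2) ^ 2 ≠ 0)]
  field_simp at hdeq
  apply mul_left_cancel₀ (show (288 * p₀ ^ 2 * (1 + p₀ ^ 2) ^ 2 : ℝ) ≠ 0 by positivity)
  linear_combination (36 * p₀ ^ 2 * (1 + p₀ ^ 2) ^ 2) * hdeq
end

section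
/- Let ν be a C² function on an interval J ⊂ (0, ∞) satisfying ν(q) > q > 0 and q ν'(q) − ν(q) ≠ 0 for all q ∈ J, and satisfying the equation ν''(q) = −¼(ν'(q) − 1)²/(ν(q) − q) − ¼(ν'(q) + 1)²/(ν(q) + q) + 2ν'(q)²/ν(q) on J (the case α = 0 of the rescaled Euler–Lagrange equation). Define the scaling invariants t(q) = ν(q)/q and x(q) = (q ν'(q) − ν(q))/q. Then for all q ∈ J one has t(q) > 1, x(q) ≠ 0, and ν''(q) · q / x(q) − 1 = 2 + (3/2)( x(q)/t(q) + t(q)/x(q) ) − x(q)/( 2 t(q) (t(q)² − 1) ); equivalently, since dt/dq = x/q, the invariants satisfy the Abel equation dx/dt = 2 + (3/2)(x/t + t/x) − x/(2t(t² − 1)). -/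
/-- (Reduction to an Abel equation via scaling invariants.) If `ν ∈ C²`
on an interval `J ⊂ (0, ∞)` satisfies `ν(q) > q > 0`, `qν'(q) − ν(q) ≠ 0` and the rescaled
Euler–Lagrange equation `ν'' = −¼(ν'−1)²/(ν−q) − ¼(ν'+1)²/(ν+q) + 2ν'²/ν` (case `α = 0`),
then the invariants `t = ν/q`, `x = (qν' − ν)/q` satisfy `t > 1`, `x ≠ 0`,
`ν''·q/x − 1 = 2 + (3/2)(x/t + t/x) − x/(2t(t² − 1))`, and `dt/dq = x/q`; i.e. they solve
the Abel equation `dx/dt = 2 + (3/2)(x/t + t/x) − x/(2t(t² − 1))`. -/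
theorem abel_reduction_of_limit_equation
    (J : Set ℝ) (hJ : J ⊆ Set.Ioi (0 : ℝ)) (hJint : J.OrdConnected)
    (ν ν1 ν2 : ℝ → ℝ)
    (hd1 : ∀ q ∈ J, HasDerivWithinAt ν (ν1 q) J q)
    (hd2 : ∀ q ∈ J, HasDerivWithinAt ν1 (ν2 q) J q)
    (hc2 : ContinuousOn ν2 J)
    (hgt : ∀ q ∈ J, q < ν q)
    (hx : ∀ q ∈ J, q * ν1 q - ν q ≠ 0)
    (heq : ∀ q ∈ J,
      ν2 q = -(1 / 4) * (ν1 q - 1) ^ 2 / (ν q - q) - (1 / 4) * (ν1 q + 1) ^ 2 / (ν q + q) +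
        2 * (ν1 q) ^ 2 / ν q) :
    ∀ q ∈ J,
      1 < ν q / q ∧
      (q * ν1 q - ν q) / q ≠ 0 ∧
      (ν2 q * q / ((q * ν1 q - ν q) / q) - 1 =
        2 + 3 / 2 * (((q * ν1 q - ν q) / q) / (ν q / q) + (ν q / q) / ((q * ν1 q - ν q) / q)) -
          ((q * ν1 q - ν q) / q) / (2 * (ν q / q) * ((ν q / q) ^ 2 - 1))) ∧
      HasDerivWithinAt (fun r => ν r / r) (((q * ν1 q - ν q) / q) / q) J q := by
  intro q hq
  have hq0 : (0:ℝ) < q := hJ hq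
  have hgtq : q < ν q := hgt q hq
  have hν0 : (0:ℝ) < ν q := lt_trans hq0 hgtq
  have hsub : ν q - q ≠ 0 := sub_ne_zero.mpr (ne_of_gt hgtq)
  have hadd : ν q + q ≠ 0 := by positivity
  have hxq := hx q hq
  refine ⟨(one_lt_div hq0).mpr hgtq, div_ne_zero hxq hq0.ne', ?_, ?_⟩
  · have hsq : ν q ^ 2 - q ^ 2 ≠ 0 := by
      have : (ν q - q) * (ν q + q) ≠ 0 := mul_ne_zero hsub hadd
      intro h; apply this; nlinarith
    have e : (ν q / q) ^ 2 - 1 = (ν q ^ 2 - q ^ 2) / q ^ 2 := by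
      field_simp
    rw [heq q hq, e]
    field_simp
    rw [← sub_eq_zero]
    field_simp
    ring
  · have h : HasDerivWithinAt (fun r => ν r / r)
        ((ν1 q * q - ν q * 1) / q ^ 2) J q :=
      (hd1 q hq).div (hasDerivWithinAt_id q J) hq0.ne'
    convert h using 1
    field_simp
end

section
/- Let f(p, v, w) = 2√(v² − p²) w²/(1 + v²)² − (pw − v)/(v(1 + v²)√(v² − p²)). For every integer k ≥ 0 there exist functions P_k(p, v, w) and Q_k(p, v) such that: P_k is a polynomial of degree at most 2 in w whose coefficients are real-analytic functions of (p, v) on the set {v ≠ 0}; Q_k is real-analytic in (p, v) on {v ≠ 0} and does not depend on w; and for all (p, v, w) with |p| < v one has ∂ᵏf/∂vᵏ(p, v, w) = (v² − p²)^{−(2k−1)/2} P_k(p, v, w) + (pw − v)(v² − p²)^{−(2k+1)/2} Q_k(p, v). -/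
/-- Partial derivative in the second variable of an analytic function of two variables,
together with its analyticity on `{v ≠ 0}`. -/
private lemma partialDeriv_exists {g : ℝ → ℝ → ℝ}
    (hg : AnalyticOnNhd ℝ (fun q : ℝ × ℝ => g q.1 q.2) {q : ℝ × ℝ | q.2 ≠ 0}) :
    ∃ g' : ℝ → ℝ → ℝ,
      AnalyticOnNhd ℝ (fun q : ℝ × ℝ => g' q.1 q.2) {q : ℝ × ℝ | q.2 ≠ 0} ∧
      ∀ p v : ℝ, v ≠ 0 → HasDerivAt (fun y => g p y) (g' p v) v := by
  refine ⟨fun p v => fderiv ℝ (fun q : ℝ × ℝ => g q.1 q.2) (p, v) ((0 : ℝ), (1 : ℝ)),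
    ?_, ?_⟩
  · exact (ContinuousLinearMap.apply ℝ ℝ ((0 : ℝ), (1 : ℝ))).comp_analyticOnNhd hg.fderiv
  · intro p v hv
    have hd : HasFDerivAt (fun q : ℝ × ℝ => g q.1 q.2)
        (fderiv ℝ (fun q : ℝ × ℝ => g q.1 q.2) (p, v)) (p, v) :=
      (hg (p, v) hv).differentiableAt.hasFDerivAt
    have hline : HasDerivAt (fun y : ℝ => ((p, y) : ℝ × ℝ)) ((0 : ℝ), (1 : ℝ)) v :=
      (hasDerivAt_const v p).prodMk (hasDerivAt_id v)
    exact hd.comp_hasDerivAt v hline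

/-- (Structure of the derivatives `∂ᵏf/∂vᵏ`.) For every `k` there are
functions `P_k(p, v, w) = a w² + b w + c` (quadratic in `w`, with coefficients
real-analytic in `(p, v)` on `{v ≠ 0}`) and `Q_k(p, v)` (real-analytic on `{v ≠ 0}`,
independent of `w`) with
`∂ᵏf/∂vᵏ = (v² − p²)^{−(2k−1)/2} P_k + (pw − v)(v² − p²)^{−(2k+1)/2} Q_k` on `|p| < v`. -/
theorem newtonF_iteratedDeriv_structure :
    ∀ k : ℕ, ∃ a b c Q : ℝ → ℝ → ℝ,
      AnalyticOnNhd ℝ (fun q : ℝ × ℝ => a q.1 q.2) {q : ℝ × ℝ | q.2 ≠ 0} ∧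
      AnalyticOnNhd ℝ (fun q : ℝ × ℝ => b q.1 q.2) {q : ℝ × ℝ | q.2 ≠ 0} ∧
      AnalyticOnNhd ℝ (fun q : ℝ × ℝ => c q.1 q.2) {q : ℝ × ℝ | q.2 ≠ 0} ∧
      AnalyticOnNhd ℝ (fun q : ℝ × ℝ => Q q.1 q.2) {q : ℝ × ℝ | q.2 ≠ 0} ∧
      ∀ p v w : ℝ, |p| < v →
        iteratedDeriv k (fun y => newtonF p y w) v =
          (v ^ 2 - p ^ 2) ^ (-(2 * (k : ℝ) - 1) / 2) *
            (a p v * w ^ 2 + b p v * w + c p v) +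
          (p * w - v) * (v ^ 2 - p ^ 2) ^ (-(2 * (k : ℝ) + 1) / 2) * Q p v := by
  intro k
  induction k with
  | zero =>
    refine ⟨fun _ v => 2 / (1 + v ^ 2) ^ 2, fun _ _ => 0, fun _ _ => 0,
      fun _ v => -(1 / (v * (1 + v ^ 2))), ?_, ?_, ?_, ?_, ?_⟩
    · intro q _
      exact analyticAt_const.div
        ((analyticAt_const.add (analyticAt_snd.pow 2)).pow 2)
        (show ((1:ℝ) + q.2 ^ 2) ^ 2 ≠ 0 by positivity)
    · exact fun q _ => analyticAt_const
    · exact fun q _ => analyticAt_const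
    · intro q hq
      have hq' : (q.2 : ℝ) ≠ 0 := hq
      exact (analyticAt_const.div
        (analyticAt_snd.mul (analyticAt_const.add (analyticAt_snd.pow 2)))
        (show q.2 * ((1:ℝ) + q.2 ^ 2) ≠ 0 from mul_ne_zero hq' (by positivity))).neg
    · intro p v w hpv
      have hv : 0 < v := lt_of_le_of_lt (abs_nonneg p) hpv
      have hx : 0 < v ^ 2 - p ^ 2 := by nlinarith [abs_nonneg p, sq_abs p]
      have hs : 0 < Real.sqrt (v ^ 2 - p ^ 2) := Real.sqrt_pos.mpr hx
      rw [iteratedDeriv_zero]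
      have e1 : (-(2 * ((0 : ℕ) : ℝ) - 1) / 2 : ℝ) = 1 / 2 := by norm_num
      have e2 : (-(2 * ((0 : ℕ) : ℝ) + 1) / 2 : ℝ) = -(1 / 2) := by norm_num
      rw [e1, e2, Real.rpow_neg hx.le, ← Real.sqrt_eq_rpow]
      unfold newtonF
      have h1 : (1 + v ^ 2) ≠ 0 := by positivity
      field_simp
      ring
  | succ k IH =>
    obtain ⟨a, b, c, Q, ha, hb, hc, hQ, hIH⟩ := IH
    obtain ⟨a₁, ha₁, ha₁d⟩ := partialDeriv_exists ha
    obtain ⟨b₁, hb₁, hb₁d⟩ := partialDeriv_exists hb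
    obtain ⟨c₁, hc₁, hc₁d⟩ := partialDeriv_exists hc
    obtain ⟨Q₁, hQ₁, hQ₁d⟩ := partialDeriv_exists hQ
    set α : ℝ := -(2 * (k : ℝ) - 1) / 2 with hα
    set β : ℝ := -(2 * (k : ℝ) + 1) / 2 with hβ
    refine ⟨fun p v => 2 * α * (v * a p v) + (v ^ 2 - p ^ 2) * a₁ p v,
      fun p v => 2 * α * (v * b p v) + (v ^ 2 - p ^ 2) * b₁ p v,
      fun p v => 2 * α * (v * c p v) + (v ^ 2 - p ^ 2) * c₁ p v - Q p v,
      fun p v => 2 * β * (v * Q p v) + (v ^ 2 - p ^ 2) * Q₁ p v,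
      ?_, ?_, ?_, ?_, ?_⟩
    · intro q hq
      exact (analyticAt_const.mul (analyticAt_snd.mul (ha q hq))).add
        (((analyticAt_snd.pow 2).sub (analyticAt_fst.pow 2)).mul (ha₁ q hq))
    · intro q hq
      exact (analyticAt_const.mul (analyticAt_snd.mul (hb q hq))).add
        (((analyticAt_snd.pow 2).sub (analyticAt_fst.pow 2)).mul (hb₁ q hq))
    · intro q hq
      exact ((analyticAt_const.mul (analyticAt_snd.mul (hc q hq))).add
        (((analyticAt_snd.pow 2).sub (analyticAt_fst.pow 2)).mul (hc₁ q hq))).sub (hQ q hq)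
    · intro q hq
      exact (analyticAt_const.mul (analyticAt_snd.mul (hQ q hq))).add
        (((analyticAt_snd.pow 2).sub (analyticAt_fst.pow 2)).mul (hQ₁ q hq))
    · intro p v w hpv
      have hv : 0 < v := lt_of_le_of_lt (abs_nonneg p) hpv
      have hv0 : v ≠ 0 := hv.ne'
      have hx : 0 < v ^ 2 - p ^ 2 := by nlinarith [abs_nonneg p, sq_abs p]
      rw [iteratedDeriv_succ]
      have hev : iteratedDeriv k (fun y => newtonF p y w) =ᶠ[nhds v]
          (fun y => (y ^ 2 - p ^ 2) ^ α * (a p y * w ^ 2 + b p y * w + c p y) +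
            (p * w - y) * (y ^ 2 - p ^ 2) ^ β * Q p y) := by
        filter_upwards [Ioi_mem_nhds hpv] with y hy
        exact hIH p y w hy
      rw [hev.deriv_eq]
      -- derivatives of the pieces
      have hxd : HasDerivAt (fun y : ℝ => y ^ 2 - p ^ 2) (2 * v) v := by
        simpa using (hasDerivAt_pow 2 v).sub_const (p ^ 2)
      have hr1 : HasDerivAt (fun y : ℝ => (y ^ 2 - p ^ 2) ^ α)
          (α * (v ^ 2 - p ^ 2) ^ (α - 1) * (2 * v)) v :=
        by have := (Real.hasDerivAt_rpow_const (p := α) (Or.inl hx.ne')).comp v hxd; exact this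
      have hr2 : HasDerivAt (fun y : ℝ => (y ^ 2 - p ^ 2) ^ β)
          (β * (v ^ 2 - p ^ 2) ^ (β - 1) * (2 * v)) v :=
        by have := (Real.hasDerivAt_rpow_const (p := β) (Or.inl hx.ne')).comp v hxd; exact this
      have had := ha₁d p v hv0
      have hbd := hb₁d p v hv0
      have hcd := hc₁d p v hv0
      have hQd := hQ₁d p v hv0
      have hP : HasDerivAt (fun y => a p y * w ^ 2 + b p y * w + c p y)
          (a₁ p v * w ^ 2 + b₁ p v * w + c₁ p v) v :=
        ((had.mul_const (w ^ 2)).add (hbd.mul_const w)).add hcd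
      have hlin : HasDerivAt (fun y : ℝ => p * w - y) (-1) v := by
        simpa using (hasDerivAt_id v).const_sub (p * w)
      have htot : HasDerivAt
          (fun y => (y ^ 2 - p ^ 2) ^ α * (a p y * w ^ 2 + b p y * w + c p y) +
            (p * w - y) * (y ^ 2 - p ^ 2) ^ β * Q p y)
          (α * (v ^ 2 - p ^ 2) ^ (α - 1) * (2 * v) *
              (a p v * w ^ 2 + b p v * w + c p v) +
            (v ^ 2 - p ^ 2) ^ α * (a₁ p v * w ^ 2 + b₁ p v * w + c₁ p v) +
            (((-1) * (v ^ 2 - p ^ 2) ^ β +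
              (p * w - v) * (β * (v ^ 2 - p ^ 2) ^ (β - 1) * (2 * v))) * Q p v +
              (p * w - v) * (v ^ 2 - p ^ 2) ^ β * Q₁ p v)) v :=
        (hr1.mul hP).add ((hlin.mul hr2).mul hQd)
      rw [htot.deriv]
      have hek1 : (-(2 * ((k + 1 : ℕ) : ℝ) - 1) / 2 : ℝ) = α - 1 := by
        rw [hα]; push_cast; ring
      have hek2 : (-(2 * ((k + 1 : ℕ) : ℝ) + 1) / 2 : ℝ) = β - 1 := by
        rw [hβ]; push_cast; ring
      rw [hek1, hek2]
      have key : ∀ t : ℝ, (v ^ 2 - p ^ 2) ^ (t + 1) =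
          (v ^ 2 - p ^ 2) ^ t * (v ^ 2 - p ^ 2) := fun t =>
        Real.rpow_add_one hx.ne' t
      have e3 : (v ^ 2 - p ^ 2) ^ β = (v ^ 2 - p ^ 2) ^ (β - 1) * (v ^ 2 - p ^ 2) := by
        rw [← key]; norm_num
      have eab : α - 1 = β := by rw [hα, hβ]; ring
      have e2 : (v ^ 2 - p ^ 2) ^ (α - 1) =
          (v ^ 2 - p ^ 2) ^ (β - 1) * (v ^ 2 - p ^ 2) := by rw [eab]; exact e3
      have e1 : (v ^ 2 - p ^ 2) ^ α =
          (v ^ 2 - p ^ 2) ^ (β - 1) * (v ^ 2 - p ^ 2) * (v ^ 2 - p ^ 2) := by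
        rw [show α = β + 1 by rw [hα, hβ]; ring, key, e3]
      rw [e1, e2, e3]
      ring
end
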